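/- Workspace Lemma (metric version): Let M be a metric space valued in [0,∞], ā ∈ M^m, q > 0, ℓ = 2^q, N = B[ā;ℓ], P the disjoint sum of q copies of M and q copies of N (points in distinct summands at distance ∞), M' = M + P, N' = N + P. Then there is a length-q back-and-forth strategy between (M',ā) and (N',ā) satisfying the separation invariants: positions split into a 'copy-cat with the identity inside B[ā; ℓ − ℓ_k]' part and summand-wise isomorphism parts, with the two parts at distance > ℓ_k = 2^{q−k} after k rounds, and points in the isomorphism part within distance ℓ_k of each other lying under the same canonical summand isomorphism. -/

import Mathlib

open ENNReal

/-- A metric on `X` valued in `[0,∞]`. -/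
structure EMet (X : Type) where
  d : X → X → ℝ≥0∞
  refl : ∀ x, d x x = 0
  symm : ∀ x y, d x y = d y x
  triangle : ∀ x y z, d x z ≤ d x y + d y z

/-- The ambient space containing both `M' = M + P` and `N' = N + P`, where
`P = q·M + q·N`: index `0` is the principal summand, indices `1,…,q` are the copies
of `M` and indices `q+1,…,2q` are the copies of `N` (carved out of copies of `M` by
the ball condition).  Distinct summands are at distance `∞`. -/
abbrev WS (q : ℕ) (M : Type) : Type := Fin (2 * q + 1) × M

/-- The sum metric: within a summand the metric of `M`, across summands `∞`. -/
noncomputable def dW {M : Type} (q : ℕ) (dM : EMet M) (x y : WS q M) : ℝ≥0∞ :=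
  if x.1 = y.1 then dM.d x.2 y.2 else ⊤

/-- The subset of the ambient space realizing `M' = M + q·M + q·N`. -/
def MSet {M : Type} (q m : ℕ) (dM : EMet M) (abar : Fin m → M) : Set (WS q M) :=
  {z | z.1.val ≤ q ∨ ∃ i, dM.d (abar i) z.2 ≤ 2 ^ q}

/-- The subset of the ambient space realizing `N' = N + q·M + q·N`,
where `N = B[ā; 2^q]`. -/
def NSet {M : Type} (q m : ℕ) (dM : EMet M) (abar : Fin m → M) : Set (WS q M) :=
  {z | (1 ≤ z.1.val ∧ z.1.val ≤ q) ∨ ∃ i, dM.d (abar i) z.2 ≤ 2 ^ q}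

namespace WorkspaceAux

variable {M : Type}

lemma dW_fst {q : ℕ} (dM : EMet M) {x y : WS q M} (h : x.1 = y.1) :
    dW q dM x y = dM.d x.2 y.2 := if_pos h

lemma dW_top {q : ℕ} (dM : EMet M) {x y : WS q M} (h : x.1 ≠ y.1) : dW q dM x y = ⊤ :=
  if_neg h

lemma dW_le {q : ℕ} (dM : EMet M) {x y : WS q M} {c : ℝ≥0∞} (hc : c ≠ ⊤)
    (h : dW q dM x y ≤ c) : x.1 = y.1 ∧ dM.d x.2 y.2 ≤ c := by
  by_cases hf : x.1 = y.1
  · exact ⟨hf, by rwa [dW_fst dM hf] at h⟩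
  · rw [dW_top dM hf] at h
    exact absurd (top_le_iff.mp h) hc

lemma dW_symm {q : ℕ} (dM : EMet M) (x y : WS q M) : dW q dM x y = dW q dM y x := by
  by_cases h : x.1 = y.1
  · rw [dW_fst dM h, dW_fst dM h.symm, dM.symm]
  · rw [dW_top dM h, dW_top dM (Ne.symm h)]

lemma dW_tri {q : ℕ} (dM : EMet M) (x y z : WS q M) :
    dW q dM x z ≤ dW q dM x y + dW q dM y z := by
  by_cases h1 : x.1 = y.1
  · by_cases h2 : y.1 = z.1
    · rw [dW_fst dM h1, dW_fst dM h2, dW_fst dM (h1.trans h2)]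
      exact dM.triangle _ _ _
    · rw [dW_top dM h2]; simp
  · rw [dW_top dM h1]; simp

lemma chain {c d1 d2 d3 : ℝ≥0∞} (hc : c ≠ ⊤) (tri : d1 ≤ d2 + d3)
    (h1 : c + c < d1) (h3 : d3 ≤ c) : c < d2 := by
  have h : c + c < d2 + c := lt_of_lt_of_le h1 (tri.trans (add_le_add le_rfl h3))
  exact (ENNReal.add_lt_add_iff_right hc).mp h

lemma fresh {q : ℕ} (lo : ℕ) (hlo : lo ≤ q) (T : Finset (Fin (2*q+1))) (hT : T.card < q) :
    ∃ cs : Fin (2*q+1), lo + 1 ≤ cs.val ∧ cs.val ≤ lo + q ∧ cs ∉ T := by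
  classical
  set A : Finset (Fin (2*q+1)) :=
    Finset.univ.image (fun i : Fin q => (⟨lo + 1 + i.val, by have := i.isLt; omega⟩ : Fin (2*q+1))) with hA
  have hcard : q ≤ A.card := by
    rw [hA, Finset.card_image_of_injective _ (fun a b h => by
      have : lo + 1 + a.val = lo + 1 + b.val := congrArg Fin.val h
      exact Fin.ext (by omega))]
    simp
  have hpos : 0 < (A \ T).card := by
    have := Finset.le_card_sdiff T A
    omega
  obtain ⟨cs, hcs⟩ := Finset.card_pos.mp hpos
  rw [Finset.mem_sdiff] at hcs
  obtain ⟨i, _, hi⟩ := Finset.mem_image.mp (hA ▸ hcs.1)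
  have hiv : lo + 1 + i.val = cs.val := congrArg Fin.val hi
  have := i.isLt
  exact ⟨cs, by omega, by omega, hcs.2⟩



variable {M : Type}

/-- The full invariant maintained by the strategy. -/
def Inv (dM : EMet M) (m q : ℕ) (abar : Fin m → M) (k : ℕ)
    (s t : Fin (m + k) → WS q M) (f : Fin (m + k) → Bool) : Prop :=
  (∀ i, s i ∈ MSet q m dM abar ∧ t i ∈ NSet q m dM abar) ∧
  (∀ i : Fin (m + k), (i : ℕ) < m → f i = false) ∧
  (∀ i, f i = false →
      (∃ j, dW q dM ((0 : Fin (2*q+1)), abar j) (s i) ≤ 2 ^ q - 2 ^ (q - k)) ∧ s i = t i) ∧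
  (∀ i j, f i = false → f j = true →
      (2 : ℝ≥0∞) ^ (q - k) < dW q dM (s i) (s j) ∧
      (2 : ℝ≥0∞) ^ (q - k) < dW q dM (t i) (t j)) ∧
  (∀ i, f i = true →
      (((s i).1.val ≤ q) ↔ (1 ≤ (t i).1.val ∧ (t i).1.val ≤ q)) ∧ (s i).2 = (t i).2) ∧
  (∀ i j, f i = true → f j = true →
      (dW q dM (s i) (s j) ≤ (2 : ℝ≥0∞) ^ (q - k) ∨
        dW q dM (t i) (t j) ≤ (2 : ℝ≥0∞) ^ (q - k)) →
      (s i).1 = (s j).1 ∧ (t i).1 = (t j).1) ∧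
  ((Finset.univ.filter (fun i => f i = true)).image (fun i => (s i).1)).card ≤ k ∧
  ((Finset.univ.filter (fun i => f i = true)).image (fun i => (t i).1)).card ≤ k

lemma inv_init (dM : EMet M) (m q : ℕ) (abar : Fin m → M) :
    Inv dM m q abar 0 (fun i => ((0 : Fin (2*q+1)), abar i))
      (fun i => ((0 : Fin (2*q+1)), abar i)) (fun _ => false) := by
  refine ⟨?_, fun _ _ => rfl, ?_, ?_, ?_, ?_, ?_, ?_⟩
  · intro i
    constructor
    · exact Or.inl (by simp)
    · exact Or.inr ⟨i, by simp [dM.refl]⟩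
  · intro i _
    refine ⟨⟨i, ?_⟩, rfl⟩
    simp [dW, dM.refl]
  · intro i j _ hj; simp at hj
  · intro i hi; simp at hi
  · intro i j hi; simp at hi
  · simp
  · simp

lemma card_snoc {q n k : ℕ} (f : Fin n → Bool) (b : Bool)
    (g : Fin n → WS q M) (x : WS q M)
    (h : ((Finset.univ.filter (fun i => f i = true)).image (fun i => (g i).1)).card ≤ k) :
    ((Finset.univ.filter (fun i => (Fin.snoc f b : Fin (n+1) → Bool) i = true)).image
        (fun i : Fin (n+1) => ((Fin.snoc g x : Fin (n+1) → WS q M) i).1)).card ≤ k + 1 := by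
  classical
  have hsub : ((Finset.univ.filter (fun i => (Fin.snoc f b : Fin (n+1) → Bool) i = true)).image
        (fun i : Fin (n+1) => ((Fin.snoc g x : Fin (n+1) → WS q M) i).1)) ⊆
      insert x.1 ((Finset.univ.filter (fun i => f i = true)).image (fun i => (g i).1)) := by
    intro a ha
    simp only [Finset.mem_image, Finset.mem_filter, Finset.mem_univ, true_and] at ha
    obtain ⟨i, hfi, hval⟩ := ha
    induction i using Fin.lastCases with
    | last =>
      rw [Fin.snoc_last] at hval
      exact hval ▸ Finset.mem_insert_self _ _
    | cast j =>
      rw [Fin.snoc_castSucc] at hval hfi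
      exact Finset.mem_insert_of_mem (Finset.mem_image.mpr
        ⟨j, Finset.mem_filter.mpr ⟨Finset.mem_univ _, hfi⟩, hval⟩)
  calc _ ≤ _ := Finset.card_le_card hsub
    _ ≤ _ + 1 := Finset.card_insert_le _ _
    _ ≤ k + 1 := by omega



variable {M : Type}

lemma pow_sub_ne_top {q k : ℕ} : (2:ℝ≥0∞) ^ q - 2 ^ (q - k) ≠ ⊤ :=
  ne_top_of_le_ne_top (ENNReal.pow_ne_top (by simp)) tsub_le_self

lemma hLc {q k : ℕ} (hk : k < q) :
    (2:ℝ≥0∞) ^ (q - k) = 2 ^ (q - (k+1)) + 2 ^ (q - (k+1)) := by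
  have h : q - k = (q - (k+1)) + 1 := by omega
  rw [h, pow_succ, mul_two]

lemma hcL {q k : ℕ} (hk : k < q) : (2:ℝ≥0∞) ^ (q - (k+1)) ≤ 2 ^ (q - k) := by
  rw [hLc hk]; exact le_self_add

lemma hsub {q k : ℕ} (hk : k < q) :
    ((2:ℝ≥0∞) ^ q - 2 ^ (q - k)) + 2 ^ (q - (k+1)) = 2 ^ q - 2 ^ (q - (k+1)) := by
  set c : ℝ≥0∞ := 2 ^ (q - (k+1)) with hc
  have hctop : c ≠ ⊤ := ENNReal.pow_ne_top (by simp)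
  have hcQ : c + c ≤ (2:ℝ≥0∞) ^ q := by
    rw [← hLc hk]
    exact pow_le_pow_right₀ one_le_two (Nat.sub_le q k)
  rw [hLc hk, ← hc, ← tsub_tsub]
  exact tsub_add_cancel_of_le (ENNReal.le_sub_of_add_le_left hctop hcQ)

lemma inv_snoc {q m : ℕ} {dM : EMet M} {abar : Fin m → M} {k : ℕ} (hk : k < q)
    {s t : Fin (m + k) → WS q M} {f : Fin (m + k) → Bool}
    (h : Inv dM m q abar k s t f) (x y : WS q M) (b : Bool)
    (OX : x ∈ MSet q m dM abar) (OY : y ∈ NSet q m dM abar)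
    (Occ : b = false →
      (∃ j, dW q dM ((0 : Fin (2*q+1)), abar j) x ≤ 2 ^ q - 2 ^ (q - (k+1))) ∧ x = y)
    (Osep1 : b = true → ∀ i, f i = false →
      (2:ℝ≥0∞) ^ (q - (k+1)) < dW q dM (s i) x ∧ (2:ℝ≥0∞) ^ (q - (k+1)) < dW q dM (t i) y)
    (Osep2 : b = false → ∀ j, f j = true →
      (2:ℝ≥0∞) ^ (q - (k+1)) < dW q dM x (s j) ∧ (2:ℝ≥0∞) ^ (q - (k+1)) < dW q dM y (t j))
    (Otyp : b = true → ((x.1.val ≤ q) ↔ (1 ≤ y.1.val ∧ y.1.val ≤ q)) ∧ x.2 = y.2)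
    (Onear : b = true → ∀ j, f j = true →
      (dW q dM x (s j) ≤ (2:ℝ≥0∞) ^ (q - (k+1)) ∨ dW q dM y (t j) ≤ (2:ℝ≥0∞) ^ (q - (k+1))) →
      x.1 = (s j).1 ∧ y.1 = (t j).1) :
    Inv dM m q abar (k+1) (Fin.snoc s x) (Fin.snoc t y) (Fin.snoc f b) := by
  obtain ⟨mem, par, cc, sep, typ, near, cardS, cardT⟩ := h
  have hmonoB : (2:ℝ≥0∞) ^ q - 2 ^ (q - k) ≤ 2 ^ q - 2 ^ (q - (k+1)) :=
    tsub_le_tsub_left (hcL hk) _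
  refine ⟨?_, ?_, ?_, ?_, ?_, ?_, ?_, ?_⟩
  · -- membership
    intro i
    induction i using Fin.lastCases with
    | last => simpa using ⟨OX, OY⟩
    | cast j => simpa using mem j
  · -- parameters are false
    intro i
    induction i using Fin.lastCases with
    | last => intro hlt; rw [Fin.val_last] at hlt; simp only [Nat.add_eq] at hlt; omega
    | cast j =>
      intro hlt
      rw [Fin.coe_castSucc] at hlt
      simpa using par j hlt
  · -- copy-cat part
    intro i
    induction i using Fin.lastCases with
    | last =>
      intro hb
      rw [Fin.snoc_last] at hb
      simpa using Occ hb
    | cast j =>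
      intro hb
      rw [Fin.snoc_castSucc] at hb
      obtain ⟨⟨jj, hjj⟩, heq⟩ := cc j hb
      simp only [Fin.snoc_castSucc]
      exact ⟨⟨jj, hjj.trans hmonoB⟩, heq⟩
  · -- separation
    intro i j
    induction i using Fin.lastCases with
    | last =>
      induction j using Fin.lastCases with
      | last => intro h1 h2; rw [Fin.snoc_last] at h1 h2; rw [h1] at h2; simp at h2
      | cast jj =>
        intro h1 h2
        rw [Fin.snoc_last] at h1
        rw [Fin.snoc_castSucc] at h2
        simpa using Osep2 h1 jj h2
    | cast ii =>
      induction j using Fin.lastCases with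
      | last =>
        intro h1 h2
        rw [Fin.snoc_castSucc] at h1
        rw [Fin.snoc_last] at h2
        simpa using Osep1 h2 ii h1
      | cast jj =>
        intro h1 h2
        rw [Fin.snoc_castSucc] at h1 h2
        have := sep ii jj h1 h2
        simp only [Fin.snoc_castSucc]
        exact ⟨(hcL hk).trans_lt this.1, (hcL hk).trans_lt this.2⟩
  · -- same type
    intro i
    induction i using Fin.lastCases with
    | last =>
      intro hb
      rw [Fin.snoc_last] at hb
      simpa using Otyp hb
    | cast j =>
      intro hb
      rw [Fin.snoc_castSucc] at hb
      simpa using typ j hb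
  · -- nearby matched points
    intro i j
    induction i using Fin.lastCases with
    | last =>
      induction j using Fin.lastCases with
      | last => intro _ _ _; simp
      | cast jj =>
        intro h1 h2 hd
        rw [Fin.snoc_last] at h1
        rw [Fin.snoc_castSucc] at h2
        simp only [Fin.snoc_last, Fin.snoc_castSucc] at hd ⊢
        exact Onear h1 jj h2 hd
    | cast ii =>
      induction j using Fin.lastCases with
      | last =>
        intro h1 h2 hd
        rw [Fin.snoc_castSucc] at h1
        rw [Fin.snoc_last] at h2
        simp only [Fin.snoc_last, Fin.snoc_castSucc] at hd ⊢
        have := Onear h2 ii h1 (by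
          rw [dW_symm dM x (s ii), dW_symm dM y (t ii)]
          exact hd)
        exact ⟨this.1.symm, this.2.symm⟩
      | cast jj =>
        intro h1 h2 hd
        rw [Fin.snoc_castSucc] at h1 h2
        simp only [Fin.snoc_castSucc] at hd ⊢
        exact near ii jj h1 h2 (hd.imp (fun h => h.trans (hcL hk)) (fun h => h.trans (hcL hk)))
  · exact card_snoc f b s x cardS
  · exact card_snoc f b t y cardT



variable {M : Type}

lemma step_left {q m : ℕ} (dM : EMet M) (abar : Fin m → M) {k : ℕ} (hk : k < q)
    {s t : Fin (m + k) → WS q M} {f : Fin (m + k) → Bool}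
    (h : Inv dM m q abar k s t f)
    (x : WS q M) (hx : x ∈ MSet q m dM abar) :
    ∃ y ∈ NSet q m dM abar, ∃ f' : Fin (m + (k+1)) → Bool,
      Inv dM m q abar (k+1) (Fin.snoc s x) (Fin.snoc t y) f' := by
  classical
  obtain ⟨mem, par, cc, sep, typ, near, cardS, cardT⟩ := h
  have hIv : Inv dM m q abar k s t f := ⟨mem, par, cc, sep, typ, near, cardS, cardT⟩
  have hctop : (2:ℝ≥0∞) ^ (q - (k+1)) ≠ ⊤ := ENNReal.pow_ne_top (by simp)
  by_cases hA : ∃ u, f u = true ∧ dW q dM x (s u) ≤ 2 ^ (q - (k+1))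
  · -- (A) the new point is close to an old matched point: use the canonical iso
    obtain ⟨u, hu, hxu⟩ := hA
    obtain ⟨hfst, hd⟩ := dW_le dM hctop hxu
    obtain ⟨htyp, hsnd⟩ := typ u hu
    have hyu : dW q dM ((t u).1, x.2) (t u) ≤ 2 ^ (q - (k+1)) := by
      rw [dW_fst dM (show ((t u).1, x.2).1 = (t u).1 from rfl)]
      simpa [← hsnd] using hd
    refine ⟨((t u).1, x.2), ?_, Fin.snoc f true, ?_⟩
    · by_cases hM : (s u).1.val ≤ q
      · exact Or.inl (htyp.mp hM)
      · rcases hx with hx1 | hx2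
        · rw [hfst] at hx1; exact absurd hx1 hM
        · exact Or.inr hx2
    · refine inv_snoc hk hIv _ _ _ hx ?_ (by simp) ?_ (by simp) ?_ ?_
      · by_cases hM : (s u).1.val ≤ q
        · exact Or.inl (htyp.mp hM)
        · rcases hx with hx1 | hx2
          · rw [hfst] at hx1; exact absurd hx1 hM
          · exact Or.inr hx2
      · -- separation of the new matched point from the copy-cat part
        intro _ i hfi
        constructor
        · exact chain hctop (dW_tri dM (s i) x (s u))
            (by rw [← hLc hk]; exact (sep i u hfi hu).1) hxu
        · exact chain hctop (dW_tri dM (t i) ((t u).1, x.2) (t u))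
            (by rw [← hLc hk]; exact (sep i u hfi hu).2) hyu
      · -- same type
        intro _
        exact ⟨by rw [hfst]; exact htyp, rfl⟩
      · -- nearby matched points
        intro _ v hv hdv
        rcases hdv with hl | hr
        · obtain ⟨he, _⟩ := dW_le dM hctop hl
          have huv : dW q dM (s u) (s v) ≤ 2 ^ (q - k) := by
            rw [hLc hk]
            exact (dW_tri dM (s u) x (s v)).trans
              (add_le_add (by rw [dW_symm]; exact hxu) hl)
          have := near u v hu hv (Or.inl huv)
          exact ⟨he, this.2⟩
        · obtain ⟨he, _⟩ := dW_le dM hctop hr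
          have huv : dW q dM (t u) (t v) ≤ 2 ^ (q - k) := by
            rw [hLc hk]
            exact (dW_tri dM (t u) ((t u).1, x.2) (t v)).trans
              (add_le_add (by rw [dW_symm]; exact hyu) hr)
          have := near u v hu hv (Or.inr huv)
          exact ⟨hfst.trans this.1, he⟩
  · by_cases hB : ∃ u, f u = false ∧ dW q dM x (s u) ≤ 2 ^ (q - (k+1))
    · -- (B) the new point is close to the copy-cat part: copy it
      obtain ⟨u, hu, hxu⟩ := hB
      obtain ⟨⟨j0, hj0⟩, hst⟩ := cc u hu
      have hccx : dW q dM ((0 : Fin (2*q+1)), abar j0) x ≤ 2 ^ q - 2 ^ (q - (k+1)) := by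
        rw [← hsub hk]
        exact (dW_tri dM _ (s u) x).trans
          (add_le_add hj0 (by rw [dW_symm]; exact hxu))
      obtain ⟨h0fst, h0d⟩ := dW_le dM pow_sub_ne_top hccx
      refine ⟨x, Or.inr ⟨j0, h0d.trans tsub_le_self⟩, Fin.snoc f false, ?_⟩
      refine inv_snoc hk hIv _ _ _ hx (Or.inr ⟨j0, h0d.trans tsub_le_self⟩)
        (fun _ => ⟨⟨j0, hccx⟩, rfl⟩) (by simp) ?_ (by simp) (by simp)
      · -- separation of the new copy-cat point from the matched part
        intro _ v hv
        constructor
        · exact not_le.mp (fun hle => hA ⟨v, hv, hle⟩)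
        · have tri : dW q dM (t u) (t v) ≤ dW q dM x (t v) + dW q dM (t u) x := by
            rw [add_comm]; exact dW_tri dM (t u) x (t v)
          have h3 : dW q dM (t u) x ≤ 2 ^ (q - (k+1)) := by
            rw [← hst, dW_symm]; exact hxu
          exact chain hctop tri (by rw [← hLc hk]; exact (sep u v hu hv).2) h3
    · -- (C) the new point is far from everything: use a fresh summand
      have hfar : ∀ u, 2 ^ (q - (k+1)) < dW q dM x (s u) := by
        intro u
        refine not_le.mp (fun hle => ?_)
        cases hfu : f u
        · exact hB ⟨u, hfu, hle⟩
        · exact hA ⟨u, hfu, hle⟩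
      have hTcard : ((Finset.univ.filter (fun i => f i = true)).image
          (fun i => (t i).1)).card < q := lt_of_le_of_lt cardT hk
      by_cases hxq : x.1.val ≤ q
      · obtain ⟨cs, h1cs, h2cs, hcs⟩ := fresh 0 (Nat.zero_le q) _ hTcard
        have hcs1 : 1 ≤ cs.val := by omega
        have hcs2 : cs.val ≤ q := by omega
        refine ⟨(cs, x.2), Or.inl ⟨hcs1, hcs2⟩, Fin.snoc f true, ?_⟩
        refine inv_snoc hk hIv _ _ _ hx (Or.inl ⟨hcs1, hcs2⟩) (by simp) ?_ (by simp)
          (fun _ => ⟨iff_of_true hxq ⟨hcs1, hcs2⟩, rfl⟩) ?_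
        · intro _ i hfi
          obtain ⟨⟨j0, hj0⟩, hst⟩ := cc i hfi
          obtain ⟨h0fst, _⟩ := dW_le dM pow_sub_ne_top hj0
          have h1 : (t i).1 = (0 : Fin (2*q+1)) := by rw [← hst, ← h0fst]
          have hti : (t i).1 ≠ ((cs, x.2) : WS q M).1 := by
            rw [h1]
            intro hcon
            have hv := congrArg Fin.val hcon
            simp at hv
            omega
          constructor
          · rw [dW_symm]; exact hfar i
          · rw [dW_top dM hti]
            exact hctop.lt_top
        · intro _ v hv hdv
          rcases hdv with hl | hr
          · exact absurd hl (not_le.mpr (hfar v))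
          · obtain ⟨he, _⟩ := dW_le dM hctop hr
            have hmemv : (t v).1 ∈ Finset.image (fun i => (t i).1)
                (Finset.filter (fun i => f i = true) Finset.univ) :=
              Finset.mem_image_of_mem _ (Finset.mem_filter.mpr ⟨Finset.mem_univ v, hv⟩)
            rw [← he] at hmemv
            exact absurd hmemv hcs
      · obtain ⟨cs, h1cs, h2cs, hcs⟩ := fresh q le_rfl _ hTcard
        have hball : ∃ j, dM.d (abar j) x.2 ≤ 2 ^ q := by
          rcases hx with hx1 | hx2
          · exact absurd hx1 hxq
          · exact hx2
        refine ⟨(cs, x.2), Or.inr hball, Fin.snoc f true, ?_⟩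
        have hcsq : ¬(1 ≤ ((cs, x.2) : WS q M).1.val ∧ ((cs, x.2) : WS q M).1.val ≤ q) := by
          show ¬(1 ≤ cs.val ∧ cs.val ≤ q); omega
        refine inv_snoc hk hIv _ _ _ hx (Or.inr hball) (by simp) ?_ (by simp)
          (fun _ => ⟨iff_of_false hxq hcsq, rfl⟩) ?_
        · intro _ i hfi
          obtain ⟨⟨j0, hj0⟩, hst⟩ := cc i hfi
          obtain ⟨h0fst, _⟩ := dW_le dM pow_sub_ne_top hj0
          have h1 : (t i).1 = (0 : Fin (2*q+1)) := by rw [← hst, ← h0fst]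
          have hti : (t i).1 ≠ ((cs, x.2) : WS q M).1 := by
            rw [h1]
            intro hcon
            have hv := congrArg Fin.val hcon
            simp at hv
            omega
          constructor
          · rw [dW_symm]; exact hfar i
          · rw [dW_top dM hti]
            exact hctop.lt_top
        · intro _ v hv hdv
          rcases hdv with hl | hr
          · exact absurd hl (not_le.mpr (hfar v))
          · obtain ⟨he, _⟩ := dW_le dM hctop hr
            have hmemv : (t v).1 ∈ Finset.image (fun i => (t i).1)
                (Finset.filter (fun i => f i = true) Finset.univ) :=
              Finset.mem_image_of_mem _ (Finset.mem_filter.mpr ⟨Finset.mem_univ v, hv⟩)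
            rw [← he] at hmemv
            exact absurd hmemv hcs



variable {M : Type}

lemma step_right {q m : ℕ} (dM : EMet M) (abar : Fin m → M) {k : ℕ} (hk : k < q)
    {s t : Fin (m + k) → WS q M} {f : Fin (m + k) → Bool}
    (h : Inv dM m q abar k s t f)
    (y : WS q M) (hy : y ∈ NSet q m dM abar) :
    ∃ x ∈ MSet q m dM abar, ∃ f' : Fin (m + (k+1)) → Bool,
      Inv dM m q abar (k+1) (Fin.snoc s x) (Fin.snoc t y) f' := by
  classical
  obtain ⟨mem, par, cc, sep, typ, near, cardS, cardT⟩ := h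
  have hIv : Inv dM m q abar k s t f := ⟨mem, par, cc, sep, typ, near, cardS, cardT⟩
  have hctop : (2:ℝ≥0∞) ^ (q - (k+1)) ≠ ⊤ := ENNReal.pow_ne_top (by simp)
  by_cases hA : ∃ u, f u = true ∧ dW q dM y (t u) ≤ 2 ^ (q - (k+1))
  · -- (A) close to an old matched point: use the canonical iso backwards
    obtain ⟨u, hu, hyu⟩ := hA
    obtain ⟨hfst, hd⟩ := dW_le dM hctop hyu
    obtain ⟨htyp, hsnd⟩ := typ u hu
    have hxu : dW q dM ((s u).1, y.2) (s u) ≤ 2 ^ (q - (k+1)) := by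
      rw [dW_fst dM (show ((s u).1, y.2).1 = (s u).1 from rfl)]
      simpa [hsnd] using hd
    have hxmem : ((s u).1, y.2) ∈ MSet q m dM abar := by
      by_cases hM : (s u).1.val ≤ q
      · exact Or.inl hM
      · have hnt : ¬(1 ≤ (t u).1.val ∧ (t u).1.val ≤ q) := fun hc => hM (htyp.mpr hc)
        rcases hy with hy1 | hy2
        · rw [hfst] at hy1; exact absurd hy1 hnt
        · exact Or.inr hy2
    refine ⟨((s u).1, y.2), hxmem, Fin.snoc f true, ?_⟩
    refine inv_snoc hk hIv _ _ _ hxmem hy (by simp) ?_ (by simp) ?_ ?_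
    · intro _ i hfi
      constructor
      · exact chain hctop (dW_tri dM (s i) ((s u).1, y.2) (s u))
          (by rw [← hLc hk]; exact (sep i u hfi hu).1) hxu
      · exact chain hctop (dW_tri dM (t i) y (t u))
          (by rw [← hLc hk]; exact (sep i u hfi hu).2) hyu
    · intro _
      refine ⟨?_, rfl⟩
      rw [hfst]
      exact htyp
    · intro _ v hv hdv
      rcases hdv with hl | hr
      · obtain ⟨he, _⟩ := dW_le dM hctop hl
        have huv : dW q dM (s u) (s v) ≤ 2 ^ (q - k) := by
          rw [hLc hk]
          exact (dW_tri dM (s u) ((s u).1, y.2) (s v)).trans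
            (add_le_add (by rw [dW_symm]; exact hxu) hl)
        have := near u v hu hv (Or.inl huv)
        exact ⟨he, hfst.trans this.2⟩
      · obtain ⟨he, _⟩ := dW_le dM hctop hr
        have huv : dW q dM (t u) (t v) ≤ 2 ^ (q - k) := by
          rw [hLc hk]
          exact (dW_tri dM (t u) y (t v)).trans
            (add_le_add (by rw [dW_symm]; exact hyu) hr)
        have := near u v hu hv (Or.inr huv)
        exact ⟨this.1, he⟩
  · by_cases hB : ∃ u, f u = false ∧ dW q dM y (t u) ≤ 2 ^ (q - (k+1))
    · -- (B) close to the copy-cat part: copy it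
      obtain ⟨u, hu, hyu⟩ := hB
      obtain ⟨⟨j0, hj0⟩, hst⟩ := cc u hu
      have hj0t : dW q dM ((0 : Fin (2*q+1)), abar j0) (t u) ≤ 2 ^ q - 2 ^ (q - k) := by
        rw [← hst]; exact hj0
      have hccy : dW q dM ((0 : Fin (2*q+1)), abar j0) y ≤ 2 ^ q - 2 ^ (q - (k+1)) := by
        rw [← hsub hk]
        exact (dW_tri dM _ (t u) y).trans (add_le_add hj0t (by rw [dW_symm]; exact hyu))
      obtain ⟨h0fst, h0d⟩ := dW_le dM pow_sub_ne_top hccy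
      have hxmem : y ∈ MSet q m dM abar := Or.inl (by rw [← h0fst]; simp)
      refine ⟨y, hxmem, Fin.snoc f false, ?_⟩
      refine inv_snoc hk hIv _ _ _ hxmem hy (fun _ => ⟨⟨j0, hccy⟩, rfl⟩) (by simp) ?_
        (by simp) (by simp)
      · intro _ v hv
        constructor
        · have tri : dW q dM (s u) (s v) ≤ dW q dM y (s v) + dW q dM (s u) y := by
            rw [add_comm]; exact dW_tri dM (s u) y (s v)
          have h3 : dW q dM (s u) y ≤ 2 ^ (q - (k+1)) := by
            rw [hst, dW_symm]; exact hyu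
          exact chain hctop tri (by rw [← hLc hk]; exact (sep u v hu hv).1) h3
        · exact not_le.mp (fun hle => hA ⟨v, hv, hle⟩)
    · -- (C) far from everything: fresh summand on the left
      have hfar : ∀ u, 2 ^ (q - (k+1)) < dW q dM y (t u) := by
        intro u
        refine not_le.mp (fun hle => ?_)
        cases hfu : f u
        · exact hB ⟨u, hfu, hle⟩
        · exact hA ⟨u, hfu, hle⟩
      have hScard : ((Finset.univ.filter (fun i => f i = true)).image
          (fun i => (s i).1)).card < q := lt_of_le_of_lt cardS hk
      by_cases hyq : 1 ≤ y.1.val ∧ y.1.val ≤ q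
      · obtain ⟨cs, h1cs, h2cs, hcs⟩ := fresh 0 (Nat.zero_le q) _ hScard
        have hcs2 : cs.val ≤ q := by omega
        have hxmem : ((cs, y.2) : WS q M) ∈ MSet q m dM abar := Or.inl hcs2
        refine ⟨(cs, y.2), hxmem, Fin.snoc f true, ?_⟩
        refine inv_snoc hk hIv _ _ _ hxmem hy (by simp) ?_ (by simp)
          (fun _ => ⟨iff_of_true hcs2 hyq, rfl⟩) ?_
        · intro _ i hfi
          obtain ⟨⟨j0, hj0⟩, hst⟩ := cc i hfi
          obtain ⟨h0fst, _⟩ := dW_le dM pow_sub_ne_top hj0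
          have hsi : (s i).1 ≠ ((cs, y.2) : WS q M).1 := by
            rw [← h0fst]
            intro hcon
            have hv := congrArg Fin.val hcon
            simp at hv
            omega
          constructor
          · rw [dW_top dM hsi]
            exact hctop.lt_top
          · rw [dW_symm]; exact hfar i
        · intro _ v hv hdv
          rcases hdv with hl | hr
          · obtain ⟨he, _⟩ := dW_le dM hctop hl
            have hmemv : (s v).1 ∈ Finset.image (fun i => (s i).1)
                (Finset.filter (fun i => f i = true) Finset.univ) :=
              Finset.mem_image_of_mem _ (Finset.mem_filter.mpr ⟨Finset.mem_univ v, hv⟩)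
            rw [← he] at hmemv
            exact absurd hmemv hcs
          · exact absurd hr (not_le.mpr (hfar v))
      · obtain ⟨cs, h1cs, h2cs, hcs⟩ := fresh q le_rfl _ hScard
        have hball : ∃ j, dM.d (abar j) y.2 ≤ 2 ^ q := by
          rcases hy with hy1 | hy2
          · exact absurd hy1 hyq
          · exact hy2
        have hxmem : ((cs, y.2) : WS q M) ∈ MSet q m dM abar := Or.inr hball
        have hcsq : ¬(((cs, y.2) : WS q M).1.val ≤ q) := by
          show ¬(cs.val ≤ q); omega
        refine ⟨(cs, y.2), hxmem, Fin.snoc f true, ?_⟩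
        refine inv_snoc hk hIv _ _ _ hxmem hy (by simp) ?_ (by simp)
          (fun _ => ⟨iff_of_false hcsq hyq, rfl⟩) ?_
        · intro _ i hfi
          obtain ⟨⟨j0, hj0⟩, hst⟩ := cc i hfi
          obtain ⟨h0fst, _⟩ := dW_le dM pow_sub_ne_top hj0
          have hsi : (s i).1 ≠ ((cs, y.2) : WS q M).1 := by
            rw [← h0fst]
            intro hcon
            have hv := congrArg Fin.val hcon
            simp at hv
            omega
          constructor
          · rw [dW_top dM hsi]
            exact hctop.lt_top
          · rw [dW_symm]; exact hfar i
        · intro _ v hv hdv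
          rcases hdv with hl | hr
          · obtain ⟨he, _⟩ := dW_le dM hctop hl
            have hmemv : (s v).1 ∈ Finset.image (fun i => (s i).1)
                (Finset.filter (fun i => f i = true) Finset.univ) :=
              Finset.mem_image_of_mem _ (Finset.mem_filter.mpr ⟨Finset.mem_univ v, hv⟩)
            rw [← he] at hmemv
            exact absurd hmemv hcs
          · exact absurd hr (not_le.mpr (hfar v))


end WorkspaceAux

/-- Workspace Lemma (metric version).  With `ℓ = 2^q`, `ℓ_k = 2^(q-k)`,
`N = B[ā;ℓ]`, `P = q·M + q·N`, `M' = M + P`, `N' = N + P`, there is a length-`q`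
back-and-forth strategy `S` between `(M',ā)` and `(N',ā)` such that every position
reached after `k` rounds splits, via a bipartition (encoded by `f`, with `false`
the `C₀/D₀`-part and `true` the `C₁/D₁`-part), into a copy-cat part lying inside
`B[ā; ℓ - ℓ_k]` on which the two sequences literally agree, and a part matched by
canonical isomorphisms between summands of the same type (copies of `M`
with copies of `M`, copies of `N` with copies of `N`; the canonical isomorphisms
preserve the underlying point of `M`); the two parts are at distance `> ℓ_k`, and
points of the matched part within distance `ℓ_k` of each other (on either side)
lie under the same canonical summand isomorphism. -/
theorem workspace_lemma_metric (M : Type) (dM : EMet M) (m q : ℕ) (hq : 0 < q)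
    (abar : Fin m → M) :
    ∃ S : ∀ k : ℕ, (Fin (m + k) → WS q M) → (Fin (m + k) → WS q M) → Prop,
      -- the initial position consists of the parameters in the principal summands
      S 0 (fun i => ((0 : Fin (2 * q + 1)), abar i))
        (fun i => ((0 : Fin (2 * q + 1)), abar i)) ∧
      -- positions lie in M' on the left and in N' on the right
      (∀ k s t, S k s t → ∀ i, s i ∈ MSet q m dM abar ∧ t i ∈ NSet q m dM abar) ∧
      -- the strategy is closed under Spoiler moves on either side, for q rounds
      (∀ k s t, S k s t → k < q →
        (∀ x ∈ MSet q m dM abar, ∃ y ∈ NSet q m dM abar,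
          S (k + 1) (Fin.snoc s x) (Fin.snoc t y)) ∧
        (∀ y ∈ NSet q m dM abar, ∃ x ∈ MSet q m dM abar,
          S (k + 1) (Fin.snoc s x) (Fin.snoc t y))) ∧
      -- the separation invariants
      (∀ k s t, S k s t → k ≤ q → ∃ f : Fin (m + k) → Bool,
        -- the parameters belong to the copy-cat part
        (∀ i : Fin (m + k), (i : ℕ) < m → f i = false) ∧
        -- the copy-cat part lies in B[ā; ℓ - ℓ_k] on both sides, and s and t agree on it
        (∀ i : Fin (m + k), f i = false →
          (∃ j, dW q dM ((0 : Fin (2 * q + 1)), abar j) (s i) ≤ 2 ^ q - 2 ^ (q - k)) ∧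
          (∃ j, dW q dM ((0 : Fin (2 * q + 1)), abar j) (t i) ≤ 2 ^ q - 2 ^ (q - k)) ∧
          s i = t i) ∧
        -- the two parts are at distance > ℓ_k on both sides
        (∀ i j : Fin (m + k), f i = false → f j = true →
          (2 : ℝ≥0∞) ^ (q - k) < dW q dM (s i) (s j) ∧
          (2 : ℝ≥0∞) ^ (q - k) < dW q dM (t i) (t j)) ∧
        -- matched points lie in summands of the same type, under the canonical iso
        (∀ i : Fin (m + k), m ≤ (i : ℕ) → f i = true →
          (((s i).1.val ≤ q) ↔ (1 ≤ (t i).1.val ∧ (t i).1.val ≤ q)) ∧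
          (s i).2 = (t i).2) ∧
        -- nearby matched points lie under the same canonical iso
        (∀ i j : Fin (m + k), m ≤ (i : ℕ) → m ≤ (j : ℕ) → f i = true → f j = true →
          (dW q dM (s i) (s j) ≤ (2 : ℝ≥0∞) ^ (q - k) ∨
            dW q dM (t i) (t j) ≤ (2 : ℝ≥0∞) ^ (q - k)) →
          ((s i).1 = (s j).1 ∧ (t i).1 = (t j).1))) := by
  
  classical
  refine ⟨fun k s t => k ≤ q ∧ ∃ f, WorkspaceAux.Inv dM m q abar k s t f, ?_, ?_, ?_, ?_⟩
  · exact ⟨Nat.zero_le q, fun _ => false, WorkspaceAux.inv_init dM m q abar⟩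
  · rintro k s t ⟨-, f, hInv⟩ i
    exact hInv.1 i
  · rintro k s t ⟨-, f, hInv⟩ hkq
    constructor
    · intro x hx
      obtain ⟨y, hy, f', h'⟩ := WorkspaceAux.step_left dM abar hkq hInv x hx
      exact ⟨y, hy, hkq, f', h'⟩
    · intro y hy
      obtain ⟨x, hx, f', h'⟩ := WorkspaceAux.step_right dM abar hkq hInv y hy
      exact ⟨x, hx, hkq, f', h'⟩
  · rintro k s t ⟨-, f, hInv⟩ -
    obtain ⟨mem, par, cc, sep, typ, near, -, -⟩ := hInv
    refine ⟨f, par, ?_, sep, fun i _ hi => typ i hi, fun i j _ _ hi hj hd => near i j hi hj hd⟩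
    intro i hfi
    obtain ⟨⟨j, hj⟩, heq⟩ := cc i hfi
    exact ⟨⟨j, hj⟩, ⟨j, heq ▸ hj⟩, heq⟩
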